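/- Let g₁, …, g_m : ℝ^n → ℝ^n be C¹ on an open neighborhood of 0 such that the vectors g₁(0), …, g_m(0) are linearly independent in ℝ^n, and define f(x,u) := Σ_{i=1}^m g_i(x) u_i. Then the control system ẋ = f(x,u) can be locally exponentially stabilized by means of continuously differentiable stationary feedback laws if and only if m = n. -/

import Mathlib

open Metric Set Filter

noncomputable section

/-- `ℝ^n` with the Euclidean norm. -/
abbrev Euc (n : ℕ) : Type := EuclideanSpace ℝ (Fin n)

/-- `ℝ^n × ℝ^m` identified with `ℝ^{n+m}` with its Euclidean norm. -/
abbrev EucProd (n m : ℕ) : Type := WithLp 2 (Euc n × Euc m)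

/-- Build a point of `ℝ^n × ℝ^m`. -/
def mkProd {n m : ℕ} (x : Euc n) (u : Euc m) : EucProd n m :=
  (WithLp.equiv 2 (Euc n × Euc m)).symm (x, u)

def pFst {n m : ℕ} (p : EucProd n m) : Euc n := ((WithLp.equiv 2 (Euc n × Euc m)) p).1

def pSnd {n m : ℕ} (p : EucProd n m) : Euc m := ((WithLp.equiv 2 (Euc n × Euc m)) p).2

/-- View a plain vector as a point of Euclidean space. -/
def vecE {n : ℕ} (v : Fin n → ℝ) : Euc n := WithLp.toLp 2 v

/-- `f` is linearly open around `z` with modulus `κ > 0`: on some neighborhood `U` of `z`,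
`B_{κ r}(f w) ⊆ f (B_r w)` whenever `w ∈ U`, `r > 0`, and `B_r w ⊆ U`. -/
def LinOpenWith {E F : Type*} [NormedAddCommGroup E] [NormedAddCommGroup F]
    (f : E → F) (z : E) (κ : ℝ) : Prop :=
  0 < κ ∧ ∃ U ∈ nhds z, ∀ w ∈ U, ∀ r : ℝ, 0 < r → closedBall w r ⊆ U →
      closedBall (f w) (κ * r) ⊆ f '' closedBall w r

/-- `f` is linearly open around `z` (with some modulus `κ > 0`). -/
def LinOpenAround {E F : Type*} [NormedAddCommGroup E] [NormedAddCommGroup F]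
    (f : E → F) (z : E) : Prop :=
  ∃ κ : ℝ, LinOpenWith f z κ

/-- `f` is `C¹` on an open neighborhood of `z`. -/
def C1Near {E F : Type*} [NormedAddCommGroup E] [NormedSpace ℝ E]
    [NormedAddCommGroup F] [NormedSpace ℝ F] (f : E → F) (z : E) : Prop :=
  ∃ U : Set E, IsOpen U ∧ z ∈ U ∧ ContDiffOn ℝ 1 f U

/-- The partial Jacobian matrix `A = ∂f/∂x(0,0)`. -/
def xJac {n m : ℕ} (f : EucProd n m → Euc n) : Matrix (Fin n) (Fin n) ℝ :=
  Matrix.of fun i j => fderiv ℝ f 0 (mkProd (EuclideanSpace.single j 1) 0) i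

/-- The partial Jacobian matrix `B = ∂f/∂u(0,0)`. -/
def uJac {n m : ℕ} (f : EucProd n m → Euc n) : Matrix (Fin n) (Fin m) ℝ :=
  Matrix.of fun i j => fderiv ℝ f 0 (mkProd 0 (EuclideanSpace.single j 1)) i

/-- The set of complex eigenvalues of a real matrix. -/
def specC {n : ℕ} (A : Matrix (Fin n) (Fin n) ℝ) : Set ℂ :=
  spectrum ℂ (A.map (Complex.ofReal : ℝ → ℂ))

/-- Local exponential stabilizability of `ẋ = f(x,u)` by stationary feedback laws
satisfying the regularity predicate `P`. -/
def ExpStabWith {n m : ℕ} (f : EucProd n m → Euc n) (P : (Euc n → Euc m) → Prop) : Prop :=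
  ∃ u : Euc n → Euc m, P u ∧ u 0 = 0 ∧
    ∃ α : ℝ, 0 < α ∧ ∃ M : ℝ, 0 < M ∧ ∃ δ : ℝ, 0 < δ ∧
      ∀ x₀ : Euc n, ‖x₀‖ < δ →
        ∃ x : ℝ → Euc n,
          (x 0 = x₀ ∧
            ∀ t ∈ Ici (0:ℝ), HasDerivWithinAt x (f (mkProd (x t) (u (x t)))) (Ici 0) t) ∧
          (∀ y : ℝ → Euc n,
            (y 0 = x₀ ∧
              ∀ t ∈ Ici (0:ℝ), HasDerivWithinAt y (f (mkProd (y t) (u (y t)))) (Ici 0) t) →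
            ∀ t ∈ Ici (0:ℝ), y t = x t) ∧
          ∀ t ∈ Ici (0:ℝ), ‖x t‖ ≤ M * Real.exp (-α * t) * ‖x₀‖

/-- Local exponential stabilizability by continuous stationary feedback laws. -/
def ExpStabCont {n m : ℕ} (f : EucProd n m → Euc n) : Prop :=
  ExpStabWith f Continuous

/-- Local exponential stabilizability by `C¹` stationary feedback laws. -/
def ExpStabC1 {n m : ℕ} (f : EucProd n m → Euc n) : Prop :=
  ExpStabWith f (fun u => ContDiff ℝ 1 u)

/-- Local asymptotic stabilizability of `ẋ = f(x,u)` by `C¹` stationary feedback laws. -/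
def AsympStabC1 {n m : ℕ} (f : EucProd n m → Euc n) : Prop :=
  ∃ u : Euc n → Euc m, ContDiff ℝ 1 u ∧ u 0 = 0 ∧
    ((∀ ε : ℝ, 0 < ε → ∃ δ : ℝ, 0 < δ ∧ ∀ x : ℝ → Euc n, ‖x 0‖ < δ →
        (∀ t ∈ Ici (0:ℝ), HasDerivWithinAt x (f (mkProd (x t) (u (x t)))) (Ici 0) t) →
        ∀ t ∈ Ici (0:ℝ), ‖x t‖ < ε) ∧
      ∃ δ₀ : ℝ, 0 < δ₀ ∧ ∀ x : ℝ → Euc n, ‖x 0‖ < δ₀ →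
        (∀ t ∈ Ici (0:ℝ), HasDerivWithinAt x (f (mkProd (x t) (u (x t)))) (Ici 0) t) →
        Tendsto x atTop (nhds 0))

/-- Local asymptotic stabilizability of the discrete-time system `x_{k+1} = f(x_k,u_k)`
by continuous stationary feedback laws. -/
def DiscAsympStabCont {n m : ℕ} (f : EucProd n m → Euc n) : Prop :=
  ∃ u : Euc n → Euc m, Continuous u ∧ u 0 = 0 ∧
    ((∀ ε : ℝ, 0 < ε → ∃ δ : ℝ, 0 < δ ∧ ∀ x₀ : Euc n, ‖x₀‖ < δ →
        ∀ k : ℕ, ‖(fun x => f (mkProd x (u x)))^[k] x₀‖ < ε) ∧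
      ∃ δ₀ : ℝ, 0 < δ₀ ∧ ∀ x₀ : Euc n, ‖x₀‖ < δ₀ →
        Tendsto (fun k => (fun x => f (mkProd x (u x)))^[k] x₀) atTop (nhds 0))


section ExpStabAux

open scoped RealInnerProductSpace

private lemma coord_le_norm {n : ℕ} (v : Euc n) (i : Fin n) : |v i| ≤ ‖v‖ := by
  rw [EuclideanSpace.norm_eq, ← Real.sqrt_sq_eq_abs]
  apply Real.sqrt_le_sqrt
  have := Finset.single_le_sum (f := fun j => ‖v j‖ ^ 2) (fun j _ => by positivity)
    (Finset.mem_univ i)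
  simpa [Real.norm_eq_abs, sq_abs] using this

set_option maxHeartbeats 1000000 in
private lemma forward {n m : ℕ} (g : Fin m → Euc n → Euc n)
    (hg : ∀ i, C1Near (g i) (0 : Euc n))
    (hind : LinearIndependent ℝ (fun i => g i 0))
    (h : ExpStabC1 (fun p : EucProd n m => ∑ i : Fin m, (pSnd p) i • g i (pFst p))) :
    m = n := by
  have hfin : Module.finrank ℝ (Euc n) = n := finrank_euclideanSpace_fin
  have hmn : m ≤ n := by
    have := hind.fintype_card_le_finrank
    simpa [hfin] using this
  by_contra hne
  have hlt : m < n := lt_of_le_of_ne hmn hne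
  -- find a unit vector orthogonal to all g i 0
  set K : Submodule ℝ (Euc n) := Submodule.span ℝ (Set.range fun i => g i 0) with hKdef
  have hKr : Module.finrank ℝ K = m := by
    simpa using finrank_span_eq_card hind
  have hsum := K.finrank_add_finrank_orthogonal
  rw [hfin, hKr] at hsum
  have hKo : Kᗮ ≠ ⊥ := by
    intro hbot
    rw [hbot, finrank_bot] at hsum
    omega
  obtain ⟨w₀, hw₀K, hw₀⟩ := (Submodule.ne_bot_iff _).mp hKo
  set w : Euc n := ‖w₀‖⁻¹ • w₀ with hwdef
  have hwK : w ∈ Kᗮ := Kᗮ.smul_mem _ hw₀K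
  have hw1 : ‖w‖ = 1 := by
    rw [hwdef, norm_smul, norm_inv, norm_norm,
      inv_mul_cancel₀ (norm_ne_zero_iff.mpr hw₀)]
  have hwg : ∀ i, ⟪w, g i 0⟫ = 0 := by
    intro i
    have : ⟪g i 0, w⟫ = 0 :=
      (Submodule.mem_orthogonal K w).mp hwK _ (Submodule.subset_span ⟨i, rfl⟩)
    rwa [real_inner_comm] at this
  obtain ⟨u, hu, hu0, α, hα, M, hM, δ, hδ, hspec⟩ := h
  set M' : ℝ := max M 1 with hM'def
  have hM1 : (1:ℝ) ≤ M' := le_max_right _ _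
  have hMM' : M ≤ M' := le_max_left _ _
  have hM'0 : (0:ℝ) < M' := lt_of_lt_of_le one_pos hM1
  -- Lipschitz bound for u near 0
  obtain ⟨L, s, hs, hLip⟩ := hu.contDiffAt.exists_lipschitzOnWith
  obtain ⟨r₀, hr₀, hr₀s⟩ := Metric.mem_nhds_iff.mp hs
  have hub : ∀ y : Euc n, ‖y‖ < r₀ → ‖u y‖ ≤ L * ‖y‖ := by
    intro y hy
    have h0s : (0:Euc n) ∈ s := mem_of_mem_nhds hs
    have hys : y ∈ s := hr₀s (by simpa [Metric.mem_ball, dist_zero_right] using hy)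
    have := hLip.dist_le_mul y hys 0 h0s
    simpa [hu0, dist_zero_right] using this
  -- choose a time horizon
  have hexp : Filter.Tendsto (fun t : ℝ => M' * Real.exp (-α * t)) atTop (nhds 0) := by
    have h1 : Filter.Tendsto (fun t : ℝ => -α * t) atTop atBot := by
      exact Filter.Tendsto.const_mul_atTop_of_neg (neg_lt_zero.mpr hα) tendsto_id
    have h2 := Real.tendsto_exp_atBot.comp h1
    simpa using h2.const_mul M'
  obtain ⟨T₀, hT₀⟩ := (Filter.eventually_atTop).mp
    (hexp.eventually (gt_mem_nhds (by norm_num : (0:ℝ) < 1/4)))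
  set T : ℝ := max T₀ 0 with hTdef
  have hT0 : (0:ℝ) ≤ T := le_max_right _ _
  have hTlt : M' * Real.exp (-α * T) < 1/4 := hT₀ T (le_max_left _ _)
  -- choose η
  set η : ℝ := (4 * ((m:ℝ) * L * M' * T + 1))⁻¹ with hηdef
  have hC0 : (0:ℝ) ≤ (m:ℝ) * L * M' * T := by positivity
  have hηpos : 0 < η := by rw [hηdef]; positivity
  have hηle : (m:ℝ) * L * M' * T * η ≤ 1/4 := by
    rw [hηdef, inv_eq_one_div, mul_one_div, div_le_div_iff₀ (by positivity) (by norm_num)]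
    nlinarith
  -- choose r
  have hcont : ∀ i : Fin m, ContinuousAt (fun y => ⟪w, g i y⟫) 0 := by
    intro i
    obtain ⟨U, hUo, hU0, hC⟩ := hg i
    exact continuousAt_const.inner (hC.continuousOn.continuousAt (hUo.mem_nhds hU0))
  have hev : ∀ᶠ y in nhds (0:Euc n), ∀ i, |⟪w, g i y⟫| ≤ η := by
    rw [eventually_all]
    intro i
    have h1 : Filter.Tendsto (fun y => ⟪w, g i y⟫) (nhds 0) (nhds 0) := by
      have := (hcont i).tendsto
      rwa [hwg i] at this
    have := (Metric.tendsto_nhds.mp h1) η hηpos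
    filter_upwards [this] with y hy
    rw [Real.dist_eq, sub_zero] at hy
    exact hy.le
  obtain ⟨r₁, hr₁, hball⟩ := Metric.eventually_nhds_iff_ball.mp hev
  set r : ℝ := min (r₁/2) (r₀/2) with hrdef
  have hr : 0 < r := lt_min (by linarith) (by linarith)
  have hrprop : ∀ y : Euc n, ‖y‖ ≤ r → ∀ i, |⟪w, g i y⟫| ≤ η := by
    intro y hy i
    apply hball y _ i
    rw [Metric.mem_ball, dist_zero_right]
    calc ‖y‖ ≤ r := hy
    _ ≤ r₁/2 := min_le_left _ _
    _ < r₁ := by linarith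
  have hrr₀ : r < r₀ := lt_of_le_of_lt (min_le_right _ _) (by linarith)
  -- choose initial point
  set δ' : ℝ := min (δ/2) (r/M') with hδ'def
  have hδ'pos : 0 < δ' := lt_min (by linarith) (by positivity)
  have hδ'δ : δ' < δ := lt_of_le_of_lt (min_le_left _ _) (by linarith)
  have hδ'r : M' * δ' ≤ r := by
    have : δ' ≤ r/M' := min_le_right _ _
    rw [le_div_iff₀ hM'0] at this
    linarith [this]
  set x₀ : Euc n := δ' • w with hx₀def
  have hx₀norm : ‖x₀‖ = δ' := by
    rw [hx₀def, norm_smul, Real.norm_eq_abs, abs_of_pos hδ'pos, hw1, mul_one]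
  obtain ⟨x, ⟨hx0, hxd⟩, _, hdecay⟩ := hspec x₀ (by rw [hx₀norm]; exact hδ'δ)
  -- bound on trajectory
  have hxb : ∀ t : ℝ, 0 ≤ t → ‖x t‖ ≤ M' * δ' := by
    intro t htt
    have h1 := hdecay t (mem_Ici.mpr htt)
    rw [hx₀norm] at h1
    have h2 : Real.exp (-α * t) ≤ 1 := Real.exp_le_one_iff.mpr ((neg_mul α t) ▸ neg_nonpos.mpr (mul_nonneg hα.le htt))
    calc ‖x t‖ ≤ M * Real.exp (-α * t) * δ' := h1
    _ ≤ M' * 1 * δ' := by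
        apply mul_le_mul _ le_rfl hδ'pos.le (by positivity)
        exact mul_le_mul hMM' h2 (Real.exp_pos _).le hM'0.le
    _ = M' * δ' := by ring
  -- derivative of the inner product
  set hfun : ℝ → ℝ := fun t => ⟪w, x t⟫ with hhdef
  set vt : ℝ → ℝ := fun t => ⟪w, ∑ i, (u (x t)) i • g i (x t)⟫ with hvtdef
  have hd : ∀ t ∈ Icc (0:ℝ) T, HasDerivWithinAt hfun (vt t) (Icc 0 T) t := by
    intro t ht
    have h1 := (hxd t (mem_Ici.mpr ht.1)).mono (Icc_subset_Ici_self : Icc (0:ℝ) T ⊆ Ici 0)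
    have h2 := (innerSL ℝ w).hasFDerivAt.comp_hasDerivWithinAt t h1
    exact h2
  have hbound : ∀ t ∈ Icc (0:ℝ) T, ‖vt t‖ ≤ (m:ℝ) * L * η * (M' * δ') := by
    intro t ht
    have hxtr : ‖x t‖ ≤ r := le_trans (hxb t ht.1) hδ'r
    have hxtr₀ : ‖x t‖ < r₀ := lt_of_le_of_lt hxtr hrr₀
    have hub' : ‖u (x t)‖ ≤ L * ‖x t‖ := hub _ hxtr₀
    have e1 : vt t = ∑ i, (u (x t)) i * ⟪w, g i (x t)⟫ := by
      show (inner ℝ w (∑ i, (u (x t)) i • g i (x t)) : ℝ) = _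
      rw [inner_sum]
      congr 1; funext i
      exact real_inner_smul_right _ _ _
    rw [Real.norm_eq_abs, e1]
    calc |∑ i, (u (x t)) i * ⟪w, g i (x t)⟫| ≤ ∑ i, |(u (x t)) i * ⟪w, g i (x t)⟫| :=
        Finset.abs_sum_le_sum_abs _ _
    _ ≤ ∑ _i : Fin m, (L * ‖x t‖) * η := by
        apply Finset.sum_le_sum
        intro i _
        rw [abs_mul]
        apply mul_le_mul _ (hrprop _ hxtr i) (abs_nonneg _) (by positivity)
        exact le_trans (coord_le_norm _ i) hub'
    _ = (m:ℝ) * ((L * ‖x t‖) * η) := by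
        rw [Finset.sum_const, Finset.card_univ, Fintype.card_fin, nsmul_eq_mul]
    _ ≤ (m:ℝ) * L * η * (M' * δ') := by
        have h2 : (L:ℝ) * ‖x t‖ * η ≤ L * (M' * δ') * η := by
          apply mul_le_mul_of_nonneg_right _ hηpos.le
          exact mul_le_mul_of_nonneg_left (hxb t ht.1) L.coe_nonneg
        calc (m:ℝ) * (L * ‖x t‖ * η) ≤ (m:ℝ) * (L * (M' * δ') * η) :=
              mul_le_mul_of_nonneg_left h2 (Nat.cast_nonneg m)
        _ = (m:ℝ) * L * η * (M' * δ') := by ring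
  have hmvt := (convex_Icc (0:ℝ) T).norm_image_sub_le_of_norm_hasDerivWithin_le hd hbound
    (left_mem_Icc.mpr hT0) (right_mem_Icc.mpr hT0)
  -- evaluate
  have hh0 : hfun 0 = δ' := by
    rw [hhdef]
    simp only [hx0, hx₀def]
    rw [real_inner_smul_right, real_inner_self_eq_norm_sq, hw1]
    ring
  have hhT : |hfun T| ≤ ‖x T‖ := by
    rw [hhdef]
    calc |⟪w, x T⟫| ≤ ‖w‖ * ‖x T‖ := abs_real_inner_le_norm _ _
    _ = ‖x T‖ := by rw [hw1, one_mul]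
  have hxT : ‖x T‖ ≤ (1/4) * δ' := by
    have h1 := hdecay T (mem_Ici.mpr hT0)
    rw [hx₀norm] at h1
    calc ‖x T‖ ≤ M * Real.exp (-α * T) * δ' := h1
    _ ≤ (M' * Real.exp (-α * T)) * δ' := by
        apply mul_le_mul_of_nonneg_right _ hδ'pos.le
        exact mul_le_mul_of_nonneg_right hMM' (Real.exp_pos _).le
    _ ≤ (1/4) * δ' := mul_le_mul_of_nonneg_right hTlt.le hδ'pos.le
  have hfinal : ‖hfun T - hfun 0‖ ≤ ((m:ℝ) * L * η * (M' * δ')) * ‖T - (0:ℝ)‖ := hmvt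
  rw [Real.norm_eq_abs, Real.norm_eq_abs, sub_zero, abs_of_nonneg hT0, hh0] at hfinal
  have h1 : |hfun T - δ'| ≤ ((m:ℝ) * L * M' * T * η) * δ' := by
    calc |hfun T - δ'| ≤ ((m:ℝ) * L * η * (M' * δ')) * T := hfinal
    _ = ((m:ℝ) * L * M' * T * η) * δ' := by ring
  have h2 : ((m:ℝ) * L * M' * T * η) * δ' ≤ (1/4) * δ' :=
    mul_le_mul_of_nonneg_right hηle hδ'pos.le
  have h3 : δ' - hfun T ≤ |hfun T - δ'| := by
    rw [abs_sub_comm]; exact le_abs_self _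
  have h4 : hfun T ≤ (1/4) * δ' := le_trans (le_abs_self _) (le_trans hhT hxT)
  linarith

set_option maxHeartbeats 1000000 in
private lemma backward {m : ℕ} (g : Fin m → Euc m → Euc m)
    (hg : ∀ i, C1Near (g i) (0 : Euc m))
    (hind : LinearIndependent ℝ (fun i => g i 0)) :
    ExpStabC1 (fun p : EucProd m m => ∑ i : Fin m, (pSnd p) i • g i (pFst p)) := by
  classical
  choose U hUo hU0 hUc using hg
  set U₀ : Set (Euc m) := ⋂ i, U i with hU₀def
  have hU₀o : IsOpen U₀ := isOpen_iInter_of_finite hUo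
  have hU₀0 : (0:Euc m) ∈ U₀ := mem_iInter.mpr hU0
  have hgC : ∀ i, ContDiffOn ℝ 1 (g i) U₀ := fun i => (hUc i).mono (iInter_subset _ i)
  -- the control-to-velocity map as a CLM-valued function
  set B : Euc m → (Euc m →L[ℝ] Euc m) :=
    fun x => ∑ i, ContinuousLinearMap.smulRightL ℝ (Euc m) (Euc m)
      (EuclideanSpace.proj i) (g i x) with hBdef
  have hBapply : ∀ (x : Euc m) (c : Euc m), B x c = ∑ i, c i • g i x := by
    intro x c
    rw [hBdef]
    simp [ContinuousLinearMap.sum_apply, ContinuousLinearMap.smulRightL,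
      ContinuousLinearMap.smulRight_apply]
  have hBC : ContDiffOn ℝ 1 B U₀ := by
    apply ContDiffOn.sum
    intro i _
    exact (ContinuousLinearMap.smulRightL ℝ (Euc m) (Euc m)
      (EuclideanSpace.proj i)).contDiff.comp_contDiffOn (hgC i)
  have hB0 : IsUnit (B 0) := by
    have h0 : ∀ c : Euc m, B 0 c = 0 → c = 0 := by
      intro c hc
      have h1 := Fintype.linearIndependent_iff.mp hind c (by rw [← hBapply]; exact hc)
      exact PiLp.ext (fun i => by simpa using h1 i)
    have hinj : Function.Injective (B 0) := by
      intro a b hab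
      have h1 : B 0 (a - b) = 0 := by rw [map_sub, hab, sub_self]
      have h2 := h0 _ h1
      exact sub_eq_zero.mp h2
    have hsurj : Function.Surjective (B 0) :=
      (LinearMap.injective_iff_surjective (f := ((B 0 : Euc m →L[ℝ] Euc m) : Euc m →ₗ[ℝ] Euc m))).mp hinj
    set e : Euc m ≃ₗ[ℝ] Euc m :=
      LinearEquiv.ofBijective ((B 0 : Euc m →L[ℝ] Euc m) : Euc m →ₗ[ℝ] Euc m) ⟨hinj, hsurj⟩ with hedef
    refine ⟨(e.toContinuousLinearEquiv).toUnit, ?_⟩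
    refine ContinuousLinearMap.ext fun c => ?_
    show e.toContinuousLinearEquiv c = B 0 c
    rw [LinearEquiv.coe_toContinuousLinearEquiv']
    rfl
  -- the good open set
  set V : Set (Euc m) := U₀ ∩ (B ⁻¹' {T | IsUnit T}) with hVdef
  have hVo : IsOpen V := by
    rw [isOpen_iff_mem_nhds]
    rintro x ⟨hxU, hxB⟩
    have h1 : U₀ ∈ nhds x := hU₀o.mem_nhds hxU
    have h2 : (B ⁻¹' {T | IsUnit T}) ∈ nhds x :=
      (hBC.continuousOn.continuousAt (hU₀o.mem_nhds hxU)).preimage_mem_nhds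
        (Units.isOpen.mem_nhds hxB)
    exact inter_mem h1 h2
  have hV0 : (0:Euc m) ∈ V := ⟨hU₀0, hB0⟩
  -- the candidate inverse map
  set vI : Euc m → Euc m := fun x => (Ring.inverse (B x)) x with hvdef
  have hvC : ContDiffOn ℝ 1 vI V := by
    intro x hx
    have hBx : ContDiffAt ℝ 1 B x := hBC.contDiffAt (hU₀o.mem_nhds hx.1)
    have h1 : ContDiffAt ℝ 1 (fun y => Ring.inverse (B y)) x := by
      have h2 := contDiffAt_ringInverse (n := 1) ℝ (hx.2.unit)
      rw [IsUnit.unit_spec] at h2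
      exact h2.comp x hBx
    exact (h1.clm_apply contDiffAt_id).contDiffWithinAt
  -- bump function
  obtain ⟨ε, hε, hεV⟩ := Metric.mem_nhds_iff.mp (hVo.mem_nhds hV0)
  set ρ : ℝ := ε/2 with hρdef
  have hρ0 : 0 < ρ := by positivity
  have hρV : closedBall (0:Euc m) ρ ⊆ V :=
    subset_trans (closedBall_subset_ball (by linarith)) hεV
  set φ : ContDiffBump (0:Euc m) := ⟨ρ/2, ρ, by positivity, by linarith⟩ with hφdef
  have hsup : tsupport (φ : Euc m → ℝ) = closedBall 0 ρ := φ.tsupport_eq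
  have hsupV : tsupport (φ : Euc m → ℝ) ⊆ V := hsup ▸ hρV
  -- the feedback law
  set u : Euc m → Euc m := fun x => (-(φ x)) • vI x with hudef
  have hcover : ∀ y : Euc m, y ∈ V ∨ φ y = 0 := by
    intro y
    by_cases hy : y ∈ tsupport (φ : Euc m → ℝ)
    · exact Or.inl (hsupV hy)
    · exact Or.inr (image_eq_zero_of_notMem_tsupport hy)
  have huC : ContDiff ℝ 1 u := by
    rw [contDiff_iff_contDiffAt]
    intro x
    by_cases hx : x ∈ tsupport (φ : Euc m → ℝ)
    · have hxV : x ∈ V := hsupV hx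
      have h1 : ContDiffAt ℝ 1 vI x := hvC.contDiffAt (hVo.mem_nhds hxV)
      exact ((φ.contDiff (n := 1)).neg.contDiffAt).smul h1
    · have hop : IsOpen (tsupport (φ : Euc m → ℝ))ᶜ := (isClosed_tsupport _).isOpen_compl
      have heq : u =ᶠ[nhds x] (fun _ => 0) := by
        filter_upwards [hop.mem_nhds hx] with y hy
        simp [hudef, image_eq_zero_of_notMem_tsupport hy]
      exact (contDiffAt_const (c := (0:Euc m))).congr_of_eventuallyEq heq
  have hu0 : u 0 = 0 := by
    rw [hudef]
    simp [hvdef]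
  -- key closed-loop identity
  have hkey : ∀ y : Euc m, (∑ i, (u y) i • g i y) = (-(φ y)) • y := by
    intro y
    rcases hcover y with hyV | hy0
    · rw [← hBapply, hudef]
      simp only [map_smul]
      have h2 : B y ((Ring.inverse (B y)) y) = y := by
        have h3 : B y * Ring.inverse (B y) = 1 := Ring.mul_inverse_cancel _ hyV.2
        calc B y ((Ring.inverse (B y)) y) = (B y * Ring.inverse (B y)) y := rfl
        _ = y := by rw [h3]; rfl
      rw [hvdef]
      show (-(φ y)) • (B y ((Ring.inverse (B y)) y)) = (-(φ y)) • y
      rw [h2]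
    · simp [hudef, hy0]
  -- the closed-loop vector field
  set Fv : Euc m → Euc m := fun y => (-(φ y)) • y with hFdef
  have hFc1 : ContDiff ℝ 1 Fv := ((φ.contDiff (n := 1)).neg).smul contDiff_id
  have hFcs : HasCompactSupport Fv := by
    apply HasCompactSupport.mono φ.hasCompactSupport
    intro y hy
    rw [Function.mem_support] at hy ⊢
    intro h0
    apply hy
    rw [hFdef]
    show (-(φ y)) • y = 0
    rw [h0]
    simp
  obtain ⟨Kf, hKf⟩ := hFc1.lipschitzWith_of_hasCompactSupport hFcs one_ne_zero
  -- the solutions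
  refine ⟨u, huC, hu0, 1, one_pos, 1, one_pos, ρ/2, by positivity, ?_⟩
  intro x₀ hx₀
  set xs : ℝ → Euc m := fun t => Real.exp (-t) • x₀ with hxsdef
  have hφ1 : ∀ t : ℝ, 0 ≤ t → φ (xs t) = 1 := by
    intro t ht
    apply φ.one_of_mem_closedBall
    rw [Metric.mem_closedBall, dist_zero_right, hxsdef]
    show ‖Real.exp (-t) • x₀‖ ≤ ρ/2
    rw [norm_smul, Real.norm_eq_abs, abs_of_pos (Real.exp_pos _)]
    have h1 : Real.exp (-t) ≤ 1 := Real.exp_le_one_iff.mpr (by linarith)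
    calc Real.exp (-t) * ‖x₀‖ ≤ 1 * ‖x₀‖ :=
      mul_le_mul_of_nonneg_right h1 (norm_nonneg _)
    _ ≤ ρ/2 := by rw [one_mul]; exact hx₀.le
  have hxsd : ∀ t : ℝ, HasDerivAt xs ((-Real.exp (-t)) • x₀) t := by
    intro t
    have hd : HasDerivAt (fun τ : ℝ => Real.exp (-τ)) (-Real.exp (-t)) t := by
      have := ((Real.hasDerivAt_exp (-t)).comp t ((hasDerivAt_id t).neg))
      simpa [Function.comp_def] using this
    exact hd.smul_const x₀
  have hFxs : ∀ t : ℝ, 0 ≤ t → Fv (xs t) = (-Real.exp (-t)) • x₀ := by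
    intro t ht
    rw [hFdef]
    show (-(φ (xs t))) • (xs t) = _
    rw [hφ1 t ht, hxsdef]
    show (-(1:ℝ)) • (Real.exp (-t) • x₀) = _
    rw [smul_smul]
    norm_num
  have hfval : ∀ y : Euc m,
      (fun p : EucProd m m => ∑ i : Fin m, (pSnd p) i • g i (pFst p)) (mkProd y (u y)) = Fv y := by
    intro y
    show (∑ i, (u y) i • g i y) = Fv y
    rw [hkey y]
  refine ⟨xs, ⟨by simp [hxsdef], ?_⟩, ?_, ?_⟩
  · -- xs solves the ODE
    intro t ht
    rw [hfval, hFxs t (mem_Ici.mp ht)]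
    exact (hxsd t).hasDerivWithinAt
  · -- uniqueness
    rintro y ⟨hy0, hyd⟩ t ht
    rw [mem_Ici] at ht
    have hycont : ContinuousOn y (Icc 0 t) := by
      intro τ hτ
      exact ((hyd τ (mem_Ici.mpr hτ.1)).continuousWithinAt).mono Icc_subset_Ici_self
    have hxscont : ContinuousOn xs (Icc 0 t) := by
      apply Continuous.continuousOn
      exact (Real.continuous_exp.comp continuous_neg).smul continuous_const
    have hyd' : ∀ τ ∈ Ico (0:ℝ) t, HasDerivWithinAt y (Fv (y τ)) (Ici τ) τ := by
      intro τ hτ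
      have h1 := (hyd τ (mem_Ici.mpr hτ.1)).mono (Ici_subset_Ici.mpr hτ.1)
      rwa [hfval] at h1
    have hxsd' : ∀ τ ∈ Ico (0:ℝ) t, HasDerivWithinAt xs (Fv (xs τ)) (Ici τ) τ := by
      intro τ hτ
      rw [hFxs τ hτ.1]
      exact (hxsd τ).hasDerivWithinAt
    have h0 : dist (y 0) (xs 0) ≤ 0 := by
      rw [hy0, hxsdef]
      simp
    have := dist_le_of_trajectories_ODE (v := fun _ => Fv) (fun _ => hKf)
      hycont hyd' hxscont hxsd' h0 t (mem_Icc.mpr ⟨ht, le_rfl⟩)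
    rw [zero_mul] at this
    exact dist_le_zero.mp this
  · -- decay
    intro t ht
    rw [mem_Ici] at ht
    rw [hxsdef]
    show ‖Real.exp (-t) • x₀‖ ≤ 1 * Real.exp (-1 * t) * ‖x₀‖
    rw [norm_smul, Real.norm_eq_abs, abs_of_pos (Real.exp_pos _), one_mul, neg_one_mul]

end ExpStabAux

/-- with `g₁(0), …, g_m(0)` linearly independent, the system
`ẋ = ∑ gᵢ(x) uᵢ` is locally exponentially stabilizable by `C¹` stationary feedback laws
iff `m = n`. -/
theorem exp_stabilizable_iff_square {n m : ℕ} (g : Fin m → Euc n → Euc n)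
    (hg : ∀ i, C1Near (g i) (0 : Euc n))
    (hind : LinearIndependent ℝ (fun i => g i 0)) :
    (ExpStabC1 (fun p : EucProd n m => ∑ i : Fin m, (pSnd p) i • g i (pFst p)) ↔ m = n) := by
  constructor
  · intro h
    exact forward g hg hind h
  · intro h
    subst h
    exact backward g hg hind
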